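/- The partial order C = {S : ω → [ω]^{<ω} : Σ_{n=1}^∞ |S(n)|/2^n < ∞}, ordered by eventual containment S ⊆* S' (S(n) ⊆ S'(n) for all but finitely many n), is Tukey equivalent to ℓ¹ = {f : ω → ℝ_{≥0} : Σ_n f(n) < ∞} ordered by eventual pointwise domination ≤*. -/

import Mathlib

open Filter Finset

/-- A subset of a set with a relation `r` is bounded if it has an `r`-upper bound. -/
def BddRel {α : Type*} (r : α → α → Prop) (X : Set α) : Prop :=
  ∃ b, ∀ a ∈ X, r a b

/-- `f` is a Tukey map from `(α, rP)` to `(β, rQ)`: preimages of bounded sets are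
bounded. -/
def IsTukeyMap {α β : Type*} (rP : α → α → Prop) (rQ : β → β → Prop) (f : α → β) : Prop :=
  ∀ X : Set β, BddRel rQ X → BddRel rP (f ⁻¹' X)

/-- The partial order `C` of slaloms `S : ω → [ω]^{<ω}` with `Σ |S(n)|/2^n < ∞`. -/
def SlalomC : Type :=
  {S : ℕ → Finset ℕ // Summable fun n => ((S n).card : ℝ) / 2 ^ n}

/-- `ℓ¹`: nonnegative summable sequences of reals. -/
def EllOne : Type :=
  {f : ℕ → ℝ // (∀ n, 0 ≤ f n) ∧ Summable f}

/-- Eventual containment `S ⊆* S'` on `C`. -/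
def slalomLe (S S' : SlalomC) : Prop :=
  ∀ᶠ n in Filter.atTop, S.1 n ⊆ S'.1 n

/-- Eventual pointwise domination `f ≤* g` on `ℓ¹`. -/
def ellOneLe (f g : EllOne) : Prop :=
  ∀ᶠ n in Filter.atTop, f.1 n ≤ g.1 n

/- ### Auxiliary lemmas -/

/-- For a summable sequence, the set where it is `≥ ε > 0` is finite. -/
lemma tukey_finite_ge {f : ℕ → ℝ} (hf : Summable f) {ε : ℝ} (hε : 0 < ε) :
    {k | ε ≤ f k}.Finite := by
  have h : ∀ᶠ k in Filter.cofinite, |f k - 0| < ε :=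
    (hf.tendsto_cofinite_zero.eventually (Metric.ball_mem_nhds 0 hε)).mono
      (fun k hk => by simpa [Real.dist_eq] using hk)
  refine (Filter.eventually_cofinite.mp h).subset fun k hk => ?_
  simp only [Set.mem_setOf_eq, not_lt, sub_zero] at *
  exact hk.trans (le_abs_self _)

lemma tukey_row_summable (s : Finset ℕ) (c : ℝ) :
    Summable (fun k => if k ∈ s then c else 0) :=
  summable_of_ne_finset_zero (s := s) fun _ hk => if_neg hk

lemma tukey_row_tsum (s : Finset ℕ) (c : ℝ) :
    ∑' k : ℕ, (if k ∈ s then c else 0) = s.card * c := by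
  rw [tsum_eq_sum (s := s) (fun k hk => if_neg hk),
    Finset.sum_congr rfl (fun k hk => if_pos hk), Finset.sum_const, nsmul_eq_mul]

/-- Key summability on the product. -/
lemma tukey_prod_summable (S : ℕ → Finset ℕ)
    (hS : Summable fun n => ((S n).card : ℝ) / 2 ^ n) :
    Summable (fun p : ℕ × ℕ => if p.2 ∈ S p.1 then (1/2 : ℝ) ^ p.1 else 0) := by
  have h0 : ∀ p : ℕ × ℕ, (0:ℝ) ≤ (if p.2 ∈ S p.1 then (1/2 : ℝ) ^ p.1 else 0) := by
    intro p
    split_ifs <;> positivity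
  refine (summable_prod_of_nonneg h0).2 ⟨fun n => tukey_row_summable (S n) ((1/2:ℝ)^n), ?_⟩
  simp only [tukey_row_tsum]
  have he : (fun n => ((S n).card : ℝ) * (1/2) ^ n) = fun n => ((S n).card : ℝ) / 2 ^ n := by
    funext n
    rw [one_div, inv_pow, div_eq_mul_inv]
  rw [he]
  exact hS

/- ### The map φ : C → ℓ¹ -/

noncomputable def tukeyPhi (S : SlalomC) : EllOne :=
  ⟨fun m => if (Nat.unpair m).2 ∈ S.1 (Nat.unpair m).1 then (1/2 : ℝ) ^ (Nat.unpair m).1 else 0,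
   fun m => by dsimp only; split_ifs <;> positivity,
   by
     rw [← Nat.pairEquiv.summable_iff]
     have he : (fun m : ℕ => if (Nat.unpair m).2 ∈ S.1 (Nat.unpair m).1 then
         (1/2 : ℝ) ^ (Nat.unpair m).1 else 0) ∘ Nat.pairEquiv
         = fun p : ℕ × ℕ => if p.2 ∈ S.1 p.1 then (1/2 : ℝ) ^ p.1 else 0 := by
       funext p
       change (if (Nat.unpair (Nat.pair p.1 p.2)).2 ∈ S.1 (Nat.unpair (Nat.pair p.1 p.2)).1 then (1/2 : ℝ) ^ (Nat.unpair (Nat.pair p.1 p.2)).1 else 0) = _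
       simp [Nat.pairEquiv, Function.uncurry, Nat.unpair_pair]
     rw [he]
     exact tukey_prod_summable S.1 S.2⟩

/- ### Level sets for ψ : ℓ¹ → C -/

def levelMem (f : ℕ → ℝ) (n k : ℕ) : Prop :=
  (1/2:ℝ)^n ≤ f k ∧ ∀ m < n, f k < (1/2:ℝ)^m

lemma level_unique {f : ℕ → ℝ} {n n' k : ℕ} (h : levelMem f n k) (h' : levelMem f n' k) :
    n = n' := by
  rcases lt_trichotomy n n' with hl | he | hl
  · exact absurd h.1 (not_le.mpr (h'.2 n hl))
  · exact he
  · exact absurd h'.1 (not_le.mpr (h.2 n' hl))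

lemma level_finite {f : ℕ → ℝ} (hf : Summable f) (n : ℕ) : {k | levelMem f n k}.Finite :=
  (tukey_finite_ge hf (by positivity : (0:ℝ) < (1/2)^n)).subset fun _ hk => hk.1

lemma level_mem_find {f : ℕ → ℝ} {k : ℕ} (h : ∃ n, (1/2:ℝ)^n ≤ f k) :
    levelMem f (Nat.find h) k :=
  ⟨Nat.find_spec h, fun _m hm => not_le.mp (Nat.find_min h hm)⟩

noncomputable def tukeyPsi (f : EllOne) : SlalomC :=
  ⟨fun n => (level_finite f.2.2 n).toFinset, by
    apply summable_of_sum_range_le (c := ∑' k, f.1 k) (fun n => by positivity)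
    intro N
    have inj : ∀ p ∈ (Finset.range N).sigma (fun n => (level_finite f.2.2 n).toFinset),
        ∀ q ∈ (Finset.range N).sigma (fun n => (level_finite f.2.2 n).toFinset),
        p.2 = q.2 → p = q := by
      rintro ⟨n, k⟩ hp ⟨n', k'⟩ hq (h : k = k')
      subst h
      simp only [Finset.mem_sigma, Set.Finite.mem_toFinset, Set.mem_setOf_eq] at hp hq
      exact Sigma.ext (level_unique hp.2 hq.2) (heq_of_eq rfl)
    calc ∑ n ∈ Finset.range N, (((level_finite f.2.2 n).toFinset.card : ℝ))/2^n
        = ∑ n ∈ Finset.range N, ∑ _k ∈ (level_finite f.2.2 n).toFinset, (1/2:ℝ)^n := by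
          refine Finset.sum_congr rfl fun n _ => ?_
          rw [Finset.sum_const, nsmul_eq_mul]
          ring_nf
          norm_num
      _ ≤ ∑ n ∈ Finset.range N, ∑ k ∈ (level_finite f.2.2 n).toFinset, f.1 k := by
          refine Finset.sum_le_sum fun n _ => Finset.sum_le_sum fun k hk => ?_
          exact ((Set.Finite.mem_toFinset _).mp hk).1
      _ = ∑ p ∈ (Finset.range N).sigma (fun n => (level_finite f.2.2 n).toFinset), f.1 p.2 := by
          rw [Finset.sum_sigma]
      _ = ∑ m ∈ ((Finset.range N).sigma (fun n => (level_finite f.2.2 n).toFinset)).image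
            (fun p => p.2), f.1 m := (Finset.sum_image inj).symm
      _ ≤ ∑' k, f.1 k := Summable.sum_le_tsum _ (fun m _ => f.2.1 m) f.2.2⟩

/- ### The theorem -/

/-- `(C, ⊆*)` and `(ℓ¹, ≤*)` are Tukey equivalent: there are Tukey maps in both
directions. -/
theorem slalomC_tukey_equiv_ellOne :
    (∃ φ : SlalomC → EllOne, IsTukeyMap slalomLe ellOneLe φ) ∧
    (∃ ψ : EllOne → SlalomC, IsTukeyMap ellOneLe slalomLe ψ) := by
  constructor
  · refine ⟨tukeyPhi, ?_⟩
    rintro X ⟨g, hg⟩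
    have hfin : ∀ n : ℕ, {k : ℕ | (1/2:ℝ)^n ≤ g.1 (Nat.pair n k)}.Finite := by
      intro n
      have h1 : {m : ℕ | (1/2:ℝ)^n ≤ g.1 m}.Finite := tukey_finite_ge g.2.2 (by positivity)
      have h2 : {k : ℕ | (1/2:ℝ)^n ≤ g.1 (Nat.pair n k)}
          = (fun k => Nat.pair n k) ⁻¹' {m | (1/2:ℝ)^n ≤ g.1 m} := rfl
      rw [h2]
      have hinj : Function.Injective (fun k => Nat.pair n k) :=
        fun a b h => (Nat.pair_eq_pair.mp h).2
      exact h1.preimage hinj.injOn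
    have hTsum : Summable fun n => (((hfin n).toFinset.card : ℝ))/2^n := by
      apply summable_of_sum_range_le (c := ∑' m, g.1 m) (fun n => by positivity)
      intro N
      have inj : ∀ p ∈ (Finset.range N).sigma (fun n => (hfin n).toFinset),
          ∀ q ∈ (Finset.range N).sigma (fun n => (hfin n).toFinset),
          Nat.pair p.1 p.2 = Nat.pair q.1 q.2 → p = q := by
        rintro ⟨n, k⟩ _ ⟨n', k'⟩ _ h
        obtain ⟨h1, h2⟩ := Nat.pair_eq_pair.mp h
        exact Sigma.ext h1 (heq_of_eq h2)
      calc ∑ n ∈ Finset.range N, (((hfin n).toFinset.card : ℝ))/2^n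
          = ∑ n ∈ Finset.range N, ∑ _k ∈ (hfin n).toFinset, (1/2:ℝ)^n := by
            refine Finset.sum_congr rfl fun n _ => ?_
            rw [Finset.sum_const, nsmul_eq_mul]
            ring_nf
            norm_num
        _ ≤ ∑ n ∈ Finset.range N, ∑ k ∈ (hfin n).toFinset, g.1 (Nat.pair n k) := by
            refine Finset.sum_le_sum fun n _ => Finset.sum_le_sum fun k hk => ?_
            exact (Set.Finite.mem_toFinset (hfin n)).mp hk
        _ = ∑ p ∈ (Finset.range N).sigma (fun n => (hfin n).toFinset),
              g.1 (Nat.pair p.1 p.2) := by rw [Finset.sum_sigma]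
        _ = ∑ m ∈ ((Finset.range N).sigma (fun n => (hfin n).toFinset)).image
              (fun p => Nat.pair p.1 p.2), g.1 m := (Finset.sum_image inj).symm
        _ ≤ ∑' m, g.1 m := Summable.sum_le_tsum _ (fun m _ => g.2.1 m) g.2.2
    refine ⟨⟨fun n => (hfin n).toFinset, hTsum⟩, ?_⟩
    intro S hS
    obtain ⟨M, hM⟩ := Filter.eventually_atTop.mp (hg _ hS)
    refine Filter.eventually_atTop.mpr ⟨M, fun n hn k hk => ?_⟩
    have h := hM (Nat.pair n k) (le_trans hn (Nat.left_le_pair n k))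
    simp only [tukeyPhi, Nat.unpair_pair] at h
    rw [if_pos hk] at h
    exact (Set.Finite.mem_toFinset _).mpr h
  · refine ⟨tukeyPsi, ?_⟩
    rintro X ⟨T, hT⟩
    have hF : Summable (fun p : ℕ × ℕ => if p.2 ∈ T.1 p.1 then (1/2:ℝ)^p.1 else 0) :=
      tukey_prod_summable T.1 T.2
    have hG : Summable (fun p : ℕ × ℕ => if p.1 ∈ T.1 p.2 then (1/2:ℝ)^p.2 else 0) := by
      rw [← (Equiv.prodComm ℕ ℕ).summable_iff]
      exact hF
    have hG0 : ∀ p : ℕ × ℕ, (0:ℝ) ≤ (if p.1 ∈ T.1 p.2 then (1/2:ℝ)^p.2 else 0) := by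
      intro p
      split_ifs <;> positivity
    obtain ⟨hfib, hrows⟩ := (summable_prod_of_nonneg hG0).1 hG
    set g0 : ℕ → ℝ := fun k => ∑' n, (if k ∈ T.1 n then (1/2:ℝ)^n else 0) with hg0
    have hg0nonneg : ∀ k, 0 ≤ g0 k :=
      fun k => tsum_nonneg (fun n => by split_ifs <;> positivity)
    refine ⟨⟨fun k => 2 * g0 k,
      fun k => mul_nonneg (by norm_num) (hg0nonneg k), hrows.mul_left 2⟩, ?_⟩
    intro f hf
    obtain ⟨N, hN⟩ := Filter.eventually_atTop.mp (hT _ hf)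
    have hsmall : ∀ᶠ k in atTop, f.1 k < (1/2:ℝ)^N :=
      f.2.2.tendsto_atTop_zero.eventually_lt_const (by positivity)
    refine hsmall.mono fun k hk => ?_
    show f.1 k ≤ 2 * g0 k
    rcases le_or_gt (f.1 k) 0 with h0 | h0
    · have := hg0nonneg k
      linarith
    · have hex : ∃ n, (1/2:ℝ)^n ≤ f.1 k := by
        obtain ⟨n, hn⟩ := exists_pow_lt_of_lt_one h0 (by norm_num : (1/2:ℝ) < 1)
        exact ⟨n, hn.le⟩
      have hmem : levelMem f.1 (Nat.find hex) k := level_mem_find hex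
      have hNn : N < Nat.find hex := by
        by_contra hle
        push_neg at hle
        have h2 : (1/2:ℝ)^N ≤ (1/2:ℝ)^(Nat.find hex) :=
          pow_le_pow_of_le_one (by norm_num) (by norm_num) hle
        linarith [hmem.1]
      have hkT : k ∈ T.1 (Nat.find hex) := by
        refine hN (Nat.find hex) hNn.le ?_
        exact (Set.Finite.mem_toFinset _).mpr hmem
      have hterm : (1/2:ℝ)^(Nat.find hex) ≤ g0 k := by
        have h3 := Summable.le_tsum (hfib k) (Nat.find hex)
          (fun m _ => by split_ifs <;> positivity)
        rw [if_pos hkT] at h3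
        exact h3
      have hlt : f.1 k < (1/2:ℝ)^(Nat.find hex - 1) := hmem.2 _ (by omega)
      obtain ⟨m, hm⟩ : ∃ m, Nat.find hex = m + 1 := ⟨Nat.find hex - 1, by omega⟩
      have heq : (1/2:ℝ)^(Nat.find hex - 1) = 2 * (1/2:ℝ)^(Nat.find hex) := by
        rw [hm, Nat.add_sub_cancel, pow_succ]
        ring
      linarith
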